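/- arXiv:1607.01427 — 5 statements merged into one kernel-verified Lean document; each statement's English description precedes it below -/
import Mathlib

section
/- Let {U(t,s)} be an α-nonuniform exponentially bounded evolution family and let u : [0,∞) → X be continuous. Then the function t ↦ φ_α(t,u) := sup_{τ ≥ t} e^{−α(τ−t)}‖U(τ,t)u(t)‖ is continuous on [0,∞). -/
open MeasureTheory Set

/-- φ_α(t,u) = sup_{τ ≥ t} e^{−α(τ−t)} ‖U(τ,t)u(t)‖. -/
noncomputable def phi {X : Type*} [NormedAddCommGroup X] [NormedSpace ℝ X]
    (U : ℝ → ℝ → X →L[ℝ] X) (α t : ℝ) (u : ℝ → X) : ℝ :=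
  ⨆ τ : Ici t, Real.exp (-α * ((τ : ℝ) - t)) * ‖U τ t (u t)‖

/-- (Φ(t)u)(τ) = U(τ,t)u(t) for τ ≥ t, u(τ) for τ < t. -/
noncomputable def Phim {X : Type*} [NormedAddCommGroup X] [NormedSpace ℝ X]
    (U : ℝ → ℝ → X →L[ℝ] X) (t : ℝ) (u : ℝ → X) : ℝ → X :=
  fun τ => if t ≤ τ then U τ t (u t) else u τ

/-- u ∈ C_α : u continuous on [0,∞) and sup_{t≥0} φ_α(t,u) < ∞. -/
def MemC {X : Type*} [NormedAddCommGroup X] [NormedSpace ℝ X]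
    (U : ℝ → ℝ → X →L[ℝ] X) (α : ℝ) (u : ℝ → X) : Prop :=
  ContinuousOn u (Ici 0) ∧
    ∃ C : ℝ, ∀ t, 0 ≤ t → ∀ τ, t ≤ τ →
      Real.exp (-α * (τ - t)) * ‖U τ t (u t)‖ ≤ C

/-- ‖u‖_α = sup_{t ≥ 0} φ_α(t,u). -/
noncomputable def normC {X : Type*} [NormedAddCommGroup X] [NormedSpace ℝ X]
    (U : ℝ → ℝ → X →L[ℝ] X) (α : ℝ) (u : ℝ → X) : ℝ :=
  ⨆ t : Ici (0:ℝ), phi U α (t : ℝ) u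

/-- γ is an admissible exponent for U. -/
def Admissible {X : Type*} [NormedAddCommGroup X] [NormedSpace ℝ X]
    (U : ℝ → ℝ → X →L[ℝ] X) (γ : ℝ) : Prop :=
  ∃ M : ℝ → ℝ, ContinuousOn M (Ici 0) ∧ (∀ s, 0 ≤ s → 0 < M s) ∧
    ∀ t s, 0 ≤ s → s ≤ t → ‖U t s‖ ≤ M s * Real.exp (γ * (t - s))


noncomputable def psiAux {X : Type*} [NormedAddCommGroup X] [NormedSpace ℝ X]
    (U : ℝ → ℝ → X →L[ℝ] X) (α t : ℝ) (x : X) : ℝ :=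
  ⨆ τ : Ici t, Real.exp (-α * ((τ : ℝ) - t)) * ‖U τ t x‖

section Aux

variable {X : Type*} [NormedAddCommGroup X] [NormedSpace ℝ X]
  (U : ℝ → ℝ → X →L[ℝ] X) (α : ℝ) (M : ℝ → ℝ)

lemma expcancel (a : ℝ) : Real.exp (-a) * Real.exp a = 1 := by
  rw [← Real.exp_add]; simp

lemma term_le (hBound : ∀ t s, 0 ≤ s → s ≤ t → ‖U t s‖ ≤ M s * Real.exp (α * (t - s)))
    {t : ℝ} (ht : 0 ≤ t) (x : X) {τ : ℝ} (hτ : t ≤ τ) :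
    Real.exp (-α * (τ - t)) * ‖U τ t x‖ ≤ M t * ‖x‖ := by
  have h1 : ‖U τ t x‖ ≤ (M t * Real.exp (α * (τ - t))) * ‖x‖ :=
    ((U τ t).le_opNorm x).trans
      (mul_le_mul_of_nonneg_right (hBound τ t ht hτ) (norm_nonneg x))
  have hc := expcancel (α * (τ - t))
  calc Real.exp (-α * (τ - t)) * ‖U τ t x‖
      ≤ Real.exp (-α * (τ - t)) * ((M t * Real.exp (α * (τ - t))) * ‖x‖) :=
        mul_le_mul_of_nonneg_left h1 (Real.exp_nonneg _)
    _ = (Real.exp (-(α * (τ - t))) * Real.exp (α * (τ - t))) * (M t * ‖x‖) := by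
        rw [neg_mul]; ring
    _ = M t * ‖x‖ := by rw [hc, one_mul]

lemma psi_bdd (hBound : ∀ t s, 0 ≤ s → s ≤ t → ‖U t s‖ ≤ M s * Real.exp (α * (t - s)))
    {t : ℝ} (ht : 0 ≤ t) (x : X) :
    BddAbove (Set.range fun τ : Ici t => Real.exp (-α * ((τ : ℝ) - t)) * ‖U τ t x‖) := by
  refine ⟨M t * ‖x‖, ?_⟩
  rintro y ⟨⟨τ, hτ⟩, rfl⟩
  exact term_le U α M hBound ht x hτ

lemma psi_le_bound (hBound : ∀ t s, 0 ≤ s → s ≤ t → ‖U t s‖ ≤ M s * Real.exp (α * (t - s)))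
    {t : ℝ} (ht : 0 ≤ t) (x : X) : psiAux U α t x ≤ M t * ‖x‖ :=
  ciSup_le fun ⟨τ, hτ⟩ => term_le U α M hBound ht x hτ

lemma term_le_psi (hBound : ∀ t s, 0 ≤ s → s ≤ t → ‖U t s‖ ≤ M s * Real.exp (α * (t - s)))
    {t : ℝ} (ht : 0 ≤ t) (x : X) {τ : ℝ} (hτ : t ≤ τ) :
    Real.exp (-α * (τ - t)) * ‖U τ t x‖ ≤ psiAux U α t x :=
  le_ciSup (psi_bdd U α M hBound ht x) (⟨τ, hτ⟩ : Ici t)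

lemma le_psi (hId : ∀ t, 0 ≤ t → ∀ x : X, U t t x = x)
    (hBound : ∀ t s, 0 ≤ s → s ≤ t → ‖U t s‖ ≤ M s * Real.exp (α * (t - s)))
    {t : ℝ} (ht : 0 ≤ t) (x : X) : ‖x‖ ≤ psiAux U α t x := by
  have h := term_le_psi U α M hBound ht x (le_refl t)
  simpa [hId t ht x] using h

lemma psi_nonneg (hId : ∀ t, 0 ≤ t → ∀ x : X, U t t x = x)
    (hBound : ∀ t s, 0 ≤ s → s ≤ t → ‖U t s‖ ≤ M s * Real.exp (α * (t - s)))
    {t : ℝ} (ht : 0 ≤ t) (x : X) : 0 ≤ psiAux U α t x :=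
  (norm_nonneg x).trans (le_psi U α M hId hBound ht x)

lemma psi_lip (hBound : ∀ t s, 0 ≤ s → s ≤ t → ‖U t s‖ ≤ M s * Real.exp (α * (t - s)))
    {t : ℝ} (ht : 0 ≤ t) (x y : X) :
    psiAux U α t x ≤ psiAux U α t y + M t * ‖x - y‖ := by
  refine ciSup_le ?_
  rintro ⟨τ, hτ⟩
  have hτ' : t ≤ τ := hτ
  have hsplit : U τ t x = U τ t y + U τ t (x - y) := by
    rw [← map_add]; congr 1; abel
  calc Real.exp (-α * (τ - t)) * ‖U τ t x‖
      ≤ Real.exp (-α * (τ - t)) * (‖U τ t y‖ + ‖U τ t (x - y)‖) := by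
        refine mul_le_mul_of_nonneg_left ?_ (Real.exp_nonneg _)
        rw [hsplit]; exact norm_add_le _ _
    _ = Real.exp (-α * (τ - t)) * ‖U τ t y‖ + Real.exp (-α * (τ - t)) * ‖U τ t (x - y)‖ := by
        ring
    _ ≤ psiAux U α t y + M t * ‖x - y‖ :=
        add_le_add (term_le_psi U α M hBound ht y hτ') (term_le U α M hBound ht (x - y) hτ')

lemma psi_A (hComp : ∀ t τ s, 0 ≤ s → s ≤ τ → τ ≤ t → ∀ x : X, U t τ (U τ s x) = U t s x)
    (hBound : ∀ t s, 0 ≤ s → s ≤ t → ‖U t s‖ ≤ M s * Real.exp (α * (t - s)))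
    {s t : ℝ} (hs : 0 ≤ s) (hst : s ≤ t) (x : X) :
    psiAux U α t x ≤ Real.exp (α * (t - s)) * psiAux U α s x + M t * ‖U t s x - x‖ := by
  have ht : 0 ≤ t := hs.trans hst
  refine ciSup_le ?_
  rintro ⟨τ, hτ⟩
  have hτt : t ≤ τ := hτ
  have hsτ : s ≤ τ := hst.trans hτt
  have hsplit : U τ t x = U τ s x + U τ t (x - U t s x) := by
    rw [map_sub, hComp τ t s hs hst hτt x]; abel
  have hexp : Real.exp (-α * (τ - t)) = Real.exp (α * (t - s)) * Real.exp (-α * (τ - s)) := by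
    rw [← Real.exp_add]; congr 1; ring
  calc Real.exp (-α * (τ - t)) * ‖U τ t x‖
      ≤ Real.exp (-α * (τ - t)) * (‖U τ s x‖ + ‖U τ t (x - U t s x)‖) := by
        refine mul_le_mul_of_nonneg_left ?_ (Real.exp_nonneg _)
        rw [hsplit]; exact norm_add_le _ _
    _ = Real.exp (α * (t - s)) * (Real.exp (-α * (τ - s)) * ‖U τ s x‖)
          + Real.exp (-α * (τ - t)) * ‖U τ t (x - U t s x)‖ := by
        rw [hexp]; ring
    _ ≤ Real.exp (α * (t - s)) * psiAux U α s x + M t * ‖U t s x - x‖ := by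
        refine add_le_add
          (mul_le_mul_of_nonneg_left (term_le_psi U α M hBound hs x hsτ) (Real.exp_nonneg _)) ?_
        have := term_le U α M hBound ht (x - U t s x) hτt
        rwa [norm_sub_rev] at this

lemma psi_B (hId : ∀ t, 0 ≤ t → ∀ x : X, U t t x = x)
    (hComp : ∀ t τ s, 0 ≤ s → s ≤ τ → τ ≤ t → ∀ x : X, U t τ (U τ s x) = U t s x)
    (hMpos : ∀ s, 0 ≤ s → 0 < M s)
    (hBound : ∀ t s, 0 ≤ s → s ≤ t → ‖U t s‖ ≤ M s * Real.exp (α * (t - s)))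
    {s t : ℝ} (hs : 0 ≤ s) (hst : s ≤ t) (x : X) {ε' : ℝ} (hε' : 0 ≤ ε')
    (hmid : ∀ τ, s ≤ τ → τ ≤ t → ‖U τ s x - x‖ ≤ ε') :
    psiAux U α s x ≤ Real.exp (|α| * (t - s)) * (psiAux U α t x + (1 + M t) * ε') := by
  have ht : 0 ≤ t := hs.trans hst
  have hMt : 0 ≤ M t := (hMpos t ht).le
  have hψt : 0 ≤ psiAux U α t x := psi_nonneg U α M hId hBound ht x
  refine ciSup_le ?_
  rintro ⟨τ, hτ⟩
  have hsτ : s ≤ τ := hτ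
  rcases le_total τ t with hc | hc
  · -- middle interval
    have h1 : ‖U τ s x‖ ≤ ‖x‖ + ε' := by
      have h0 : ‖U τ s x‖ ≤ ‖x‖ + ‖U τ s x - x‖ := by
        calc ‖U τ s x‖ = ‖x + (U τ s x - x)‖ := by congr 1; abel
          _ ≤ ‖x‖ + ‖U τ s x - x‖ := norm_add_le _ _
      linarith [hmid τ hsτ hc]
    have h2 : Real.exp (-α * (τ - s)) ≤ Real.exp (|α| * (t - s)) := by
      apply Real.exp_le_exp.2
      have h3 : -α * (τ - s) ≤ |α| * (τ - s) :=
        mul_le_mul_of_nonneg_right (neg_le_abs α) (by linarith)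
      have h4 : |α| * (τ - s) ≤ |α| * (t - s) :=
        mul_le_mul_of_nonneg_left (by linarith) (abs_nonneg α)
      linarith
    have h5 : ‖x‖ + ε' ≤ psiAux U α t x + (1 + M t) * ε' := by
      have h6 := le_psi U α M hId hBound ht x
      nlinarith
    exact mul_le_mul h2 (h1.trans h5) (norm_nonneg _) (Real.exp_nonneg _)
  · -- tail
    have hUε : ‖U t s x - x‖ ≤ ε' := hmid t hst (le_refl t)
    have h1 : U τ s x = U τ t x + U τ t (U t s x - x) := by
      rw [map_sub, hComp τ t s hs hst hc x]; abel
    have h2 : Real.exp (-α * (τ - t)) * ‖U τ t (U t s x - x)‖ ≤ M t * ε' := by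
      have := term_le U α M hBound ht (U t s x - x) hc
      calc Real.exp (-α * (τ - t)) * ‖U τ t (U t s x - x)‖ ≤ M t * ‖U t s x - x‖ := this
        _ ≤ M t * ε' := mul_le_mul_of_nonneg_left hUε hMt
    have hexp : Real.exp (-α * (τ - s)) = Real.exp (-α * (t - s)) * Real.exp (-α * (τ - t)) := by
      rw [← Real.exp_add]; congr 1; ring
    have h3 : Real.exp (-α * (t - s)) ≤ Real.exp (|α| * (t - s)) := by
      apply Real.exp_le_exp.2
      exact mul_le_mul_of_nonneg_right (neg_le_abs α) (by linarith)
    calc Real.exp (-α * (τ - s)) * ‖U τ s x‖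
        ≤ Real.exp (-α * (τ - s)) * (‖U τ t x‖ + ‖U τ t (U t s x - x)‖) := by
          refine mul_le_mul_of_nonneg_left ?_ (Real.exp_nonneg _)
          rw [h1]; exact norm_add_le _ _
      _ = Real.exp (-α * (t - s)) * (Real.exp (-α * (τ - t)) * ‖U τ t x‖
            + Real.exp (-α * (τ - t)) * ‖U τ t (U t s x - x)‖) := by
          rw [hexp]; ring
      _ ≤ Real.exp (-α * (t - s)) * (psiAux U α t x + M t * ε') := by
          refine mul_le_mul_of_nonneg_left
            (add_le_add (term_le_psi U α M hBound ht x hc) h2) (Real.exp_nonneg _)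
      _ ≤ Real.exp (|α| * (t - s)) * (psiAux U α t x + (1 + M t) * ε') := by
          refine mul_le_mul h3 (by nlinarith) (by nlinarith) (Real.exp_nonneg _)

end Aux


theorem stmt1 {X : Type*} [NormedAddCommGroup X] [NormedSpace ℝ X] [CompleteSpace X]
    (U : ℝ → ℝ → X →L[ℝ] X)
    (hId : ∀ t, 0 ≤ t → ∀ x : X, U t t x = x)
    (hComp : ∀ t τ s, 0 ≤ s → s ≤ τ → τ ≤ t → ∀ x : X, U t τ (U τ s x) = U t s x)
    (hCont : ∀ x : X, ContinuousOn (fun p : ℝ × ℝ => U p.1 p.2 x) {p | 0 ≤ p.2 ∧ p.2 ≤ p.1})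
    (α : ℝ) (M : ℝ → ℝ) (hM : ContinuousOn M (Ici 0)) (hMpos : ∀ s, 0 ≤ s → 0 < M s)
    (hBound : ∀ t s, 0 ≤ s → s ≤ t → ‖U t s‖ ≤ M s * Real.exp (α * (t - s)))
    (u : ℝ → X) (hu : ContinuousOn u (Ici 0)) :
    ContinuousOn (fun t => phi U α t u) (Ici 0) := by
  have hphi : ∀ t, phi U α t u = psiAux U α t (u t) := fun t => rfl
  rw [Metric.continuousOn_iff]
  intro t₀ ht₀ ε hε
  obtain ⟨x₀, hx₀⟩ : ∃ x₀ : X, x₀ = u t₀ := ⟨_, rfl⟩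
  obtain ⟨K, hKdef⟩ : ∃ K : ℝ, K = M t₀ + 1 := ⟨_, rfl⟩
  have hK : 0 < K := by have := hMpos t₀ ht₀; rw [hKdef]; linarith
  obtain ⟨B, hBdef⟩ : ∃ B : ℝ, B = K * ‖x₀‖ + 1 := ⟨_, rfl⟩
  have hB : 0 < B := by rw [hBdef]; positivity
  obtain ⟨ε', hε'def⟩ : ∃ e : ℝ, e = ε / (8 * (1 + K)) := ⟨_, rfl⟩
  have hε'pos : 0 < ε' := by rw [hε'def]; positivity
  have hε'eq : (1 + K) * ε' = ε / 8 := by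
    rw [hε'def]; field_simp
  obtain ⟨ε₁, hε₁def⟩ : ∃ e : ℝ, e = min (ε / (4 * B)) 1 := ⟨_, rfl⟩
  have hε₁pos : 0 < ε₁ := by rw [hε₁def]; exact lt_min (by positivity) one_pos
  have hε₁le : ε₁ ≤ ε / (4 * B) := hε₁def ▸ min_le_left _ _
  have hε₁le1 : ε₁ ≤ 1 := hε₁def ▸ min_le_right _ _
  have hε₁B : ε₁ * B ≤ ε / 4 := by
    have h := (le_div_iff₀ (by positivity : (0:ℝ) < 4 * B)).1 hε₁le
    linarith
  -- δ₁ : control of exp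
  have hexpc : ContinuousAt (fun d : ℝ => Real.exp (|α| * d)) 0 :=
    (Real.continuous_exp.comp (continuous_const.mul continuous_id)).continuousAt
  rw [Metric.continuousAt_iff] at hexpc
  obtain ⟨δ₁, hδ₁, h₁⟩ := hexpc ε₁ hε₁pos
  -- δ₂ : continuity of u
  have hu0 := hu t₀ ht₀
  rw [Metric.continuousWithinAt_iff] at hu0
  obtain ⟨δ₂, hδ₂, h₂⟩ := hu0 (ε / (4 * K)) (by positivity)
  -- δ₃ : continuity of M
  have hM0 := hM t₀ ht₀
  rw [Metric.continuousWithinAt_iff] at hM0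
  obtain ⟨δ₃, hδ₃, h₃⟩ := hM0 1 one_pos
  -- δ₄ : joint continuity of U at (t₀,t₀)
  have hU0 := hCont x₀ (t₀, t₀) ⟨ht₀, le_refl t₀⟩
  rw [Metric.continuousWithinAt_iff] at hU0
  obtain ⟨δ₄, hδ₄, h₄⟩ := hU0 ε' hε'pos
  obtain ⟨δ, hδdef⟩ : ∃ d : ℝ, d = min (min (δ₁ / 2) δ₂) (min δ₃ δ₄) := ⟨_, rfl⟩
  have hδ : 0 < δ := by
    rw [hδdef]; exact lt_min (lt_min (by linarith) hδ₂) (lt_min hδ₃ hδ₄)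
  have hδle1 : δ ≤ δ₁ / 2 := hδdef ▸ (min_le_left _ _).trans (min_le_left _ _)
  have hδle2 : δ ≤ δ₂ := hδdef ▸ (min_le_left _ _).trans (min_le_right _ _)
  have hδle3 : δ ≤ δ₃ := hδdef ▸ (min_le_right _ _).trans (min_le_left _ _)
  have hδle4 : δ ≤ δ₄ := hδdef ▸ (min_le_right _ _).trans (min_le_right _ _)
  refine ⟨δ, hδ, ?_⟩
  intro t ht hdist
  -- M bounds near t₀
  have hMK : ∀ r : ℝ, 0 ≤ r → dist r t₀ < δ → M r ≤ K := by
    intro r hr hrd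
    have h := h₃ hr (hrd.trans_le hδle3)
    rw [Real.dist_eq] at h
    have h' := abs_lt.1 h
    rw [hKdef]; linarith [h'.1, h'.2]
  -- key estimate for psiAux at two nearby points, with fixed vector x₀
  have key : ∀ s T : ℝ, 0 ≤ s → s ≤ T → dist s t₀ < δ → dist T t₀ < δ →
      |psiAux U α T x₀ - psiAux U α s x₀| ≤ ε / 2 := by
    intro s T hs hsT hsd hTd
    have hT : 0 ≤ T := hs.trans hsT
    have hdδ : T - s < 2 * δ := by
      rw [Real.dist_eq] at hsd hTd
      have h1 := abs_lt.1 hsd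
      have h2 := abs_lt.1 hTd
      linarith [h1.1, h1.2, h2.1, h2.2]
    -- exp bound
    have hexpb : Real.exp (|α| * (T - s)) < 1 + ε₁ := by
      have hdd : dist (T - s) 0 < δ₁ := by
        rw [Real.dist_eq, sub_zero, abs_of_nonneg (by linarith : (0:ℝ) ≤ T - s)]
        linarith
      have h := h₁ hdd
      rw [Real.dist_eq] at h
      simp only [mul_zero, Real.exp_zero] at h
      have habs := abs_lt.1 h
      linarith [habs.2]
    have hE1 : Real.exp (|α| * (T - s)) - 1 ≤ ε₁ := by linarith
    have hE2 : Real.exp (|α| * (T - s)) ≤ 2 := by linarith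
    have hE0 : (1:ℝ) ≤ Real.exp (|α| * (T - s)) :=
      Real.one_le_exp (mul_nonneg (abs_nonneg α) (by linarith))
    -- middle uniform bound
    have hmid : ∀ τ, s ≤ τ → τ ≤ T → ‖U τ s x₀ - x₀‖ ≤ ε' := by
      intro τ hsτ hτT
      have hτd : dist τ t₀ < δ := by
        rw [Real.dist_eq] at hsd hTd ⊢
        have h1 := abs_lt.1 hsd
        have h2 := abs_lt.1 hTd
        rw [abs_lt]; constructor <;> linarith [h1.1, h1.2, h2.1, h2.2]
      have hp : ((τ, s) : ℝ × ℝ) ∈ {p : ℝ × ℝ | 0 ≤ p.2 ∧ p.2 ≤ p.1} := ⟨hs, hsτ⟩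
      have hpd : dist ((τ, s) : ℝ × ℝ) (t₀, t₀) < δ₄ := by
        rw [Prod.dist_eq]
        exact max_lt (hτd.trans_le hδle4) (hsd.trans_le hδle4)
      have h := h₄ hp hpd
      simp only [dist_eq_norm, hId t₀ ht₀ x₀] at h
      exact h.le
    -- bounds on psi
    have hMsK : M s ≤ K := hMK s hs hsd
    have hMTK : M T ≤ K := hMK T hT hTd
    have hψs0 : 0 ≤ psiAux U α s x₀ := psi_nonneg U α M hId hBound hs x₀
    have hψT0 : 0 ≤ psiAux U α T x₀ := psi_nonneg U α M hId hBound hT x₀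
    have hψsB : psiAux U α s x₀ ≤ B := by
      have h := psi_le_bound U α M hBound hs x₀
      have h2 : M s * ‖x₀‖ ≤ K * ‖x₀‖ := mul_le_mul_of_nonneg_right hMsK (norm_nonneg _)
      rw [hBdef]; linarith
    have hψTB : psiAux U α T x₀ ≤ B := by
      have h := psi_le_bound U α M hBound hT x₀
      have h2 : M T * ‖x₀‖ ≤ K * ‖x₀‖ := mul_le_mul_of_nonneg_right hMTK (norm_nonneg _)
      rw [hBdef]; linarith
    -- direction A : psi T - psi s
    have hA : psiAux U α T x₀ - psiAux U α s x₀ ≤ ε / 2 := by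
      have hA0 := psi_A U α M hComp hBound hs hsT x₀
      have hexpA : Real.exp (α * (T - s)) ≤ Real.exp (|α| * (T - s)) :=
        Real.exp_le_exp.2 (mul_le_mul_of_nonneg_right (le_abs_self α) (by linarith))
      have hUb : ‖U T s x₀ - x₀‖ ≤ ε' := hmid T hsT (le_refl T)
      have h1 : Real.exp (α * (T - s)) * psiAux U α s x₀
          ≤ Real.exp (|α| * (T - s)) * psiAux U α s x₀ :=
        mul_le_mul_of_nonneg_right hexpA hψs0
      have h2 : M T * ‖U T s x₀ - x₀‖ ≤ K * ε' := by
        calc M T * ‖U T s x₀ - x₀‖ ≤ M T * ε' :=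
              mul_le_mul_of_nonneg_left hUb (hMpos T hT).le
          _ ≤ K * ε' := mul_le_mul_of_nonneg_right hMTK hε'pos.le
      have h3 : (Real.exp (|α| * (T - s)) - 1) * psiAux U α s x₀ ≤ ε₁ * B := by
        have := mul_le_mul hE1 hψsB hψs0 hε₁pos.le
        linarith
      have h4 : K * ε' ≤ ε / 8 := by linarith
      linarith
    -- direction B : psi s - psi T
    have hBdir : psiAux U α s x₀ - psiAux U α T x₀ ≤ ε / 2 := by
      have hB0 := psi_B U α M hId hComp hMpos hBound hs hsT x₀ hε'pos.le hmid
      have h1 : (Real.exp (|α| * (T - s)) - 1) * psiAux U α T x₀ ≤ ε₁ * B := by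
        have := mul_le_mul hE1 hψTB hψT0 hε₁pos.le
        linarith
      have h2 : Real.exp (|α| * (T - s)) * ((1 + M T) * ε') ≤ 2 * ((1 + K) * ε') := by
        have ha : (1 + M T) * ε' ≤ (1 + K) * ε' :=
          mul_le_mul_of_nonneg_right (by linarith) hε'pos.le
        have hb : 0 ≤ (1 + M T) * ε' := by
          have hMT0 := (hMpos T hT).le; positivity
        calc Real.exp (|α| * (T - s)) * ((1 + M T) * ε') ≤ 2 * ((1 + M T) * ε') :=
              mul_le_mul_of_nonneg_right hE2 hb
          _ ≤ 2 * ((1 + K) * ε') := by linarith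
      have h3 : 2 * ((1 + K) * ε') ≤ ε / 4 := by rw [hε'eq]; linarith
      nlinarith [hB0, h1, h2, h3]
    rw [abs_sub_le_iff]
    exact ⟨hA, hBdir⟩
  -- assemble
  have hkey : |psiAux U α t x₀ - psiAux U α t₀ x₀| ≤ ε / 2 := by
    rcases le_total t t₀ with h | h
    · have hk := key t t₀ ht h hdist (by simpa using hδ)
      rwa [abs_sub_comm] at hk
    · exact key t₀ t ht₀ h (by simpa using hδ) hdist
  have hMtK : M t ≤ K := hMK t ht hdist
  have hlip : |psiAux U α t (u t) - psiAux U α t x₀| ≤ M t * ‖u t - x₀‖ := by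
    rw [abs_sub_le_iff]
    constructor
    · have := psi_lip U α M hBound ht (u t) x₀; linarith
    · have := psi_lip U α M hBound ht x₀ (u t)
      rw [norm_sub_rev] at this; linarith
  have hut : ‖u t - x₀‖ < ε / (4 * K) := by
    have h := h₂ ht (hdist.trans_le hδle2)
    rw [dist_eq_norm, ← hx₀] at h
    exact h
  have hfirst : M t * ‖u t - x₀‖ ≤ ε / 4 := by
    have h1 : M t * ‖u t - x₀‖ ≤ K * ‖u t - x₀‖ :=
      mul_le_mul_of_nonneg_right hMtK (norm_nonneg _)
    have h2 : K * ‖u t - x₀‖ ≤ K * (ε / (4 * K)) :=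
      mul_le_mul_of_nonneg_left hut.le hK.le
    have h3 : K * (ε / (4 * K)) = ε / 4 := by field_simp
    linarith
  rw [Real.dist_eq, hphi, hphi, ← hx₀]
  calc |psiAux U α t (u t) - psiAux U α t₀ x₀|
      ≤ |psiAux U α t (u t) - psiAux U α t x₀| + |psiAux U α t x₀ - psiAux U α t₀ x₀| :=
        abs_sub_le _ _ _
    _ ≤ M t * ‖u t - x₀‖ + ε / 2 := add_le_add hlip hkey
    _ ≤ ε / 4 + ε / 2 := by linarith
    _ < ε := by linarith
end

section
/- For the scalar evolution family U(t,s) = e^{f(t)−f(s)}·Id on a Banach space X, where f(t) = −2t + t sin²t, the set of admissible exponents equals [−1, ∞); that is, for every α ≥ −1 there is a continuous M : [0,∞) → (0,∞) with e^{f(t)−f(s)} ≤ M(s)e^{α(t−s)} for all t ≥ s ≥ 0, and for every α < −1 no such M exists. -/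
open Set

/-- f(t) = −2t + t sin²t. -/
noncomputable def fEx (t : ℝ) : ℝ := -2 * t + t * (Real.sin t) ^ 2

theorem stmt5 :
    (∀ α : ℝ, -1 ≤ α → ∃ M : ℝ → ℝ, ContinuousOn M (Ici 0) ∧
        (∀ s, 0 ≤ s → 0 < M s) ∧
        ∀ t s, 0 ≤ s → s ≤ t →
          Real.exp (fEx t - fEx s) ≤ M s * Real.exp (α * (t - s))) ∧
    (∀ α : ℝ, α < -1 → ¬ ∃ M : ℝ → ℝ, ContinuousOn M (Ici 0) ∧
        (∀ s, 0 ≤ s → 0 < M s) ∧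
        ∀ t s, 0 ≤ s → s ≤ t →
          Real.exp (fEx t - fEx s) ≤ M s * Real.exp (α * (t - s))) := by
  constructor
  · intro α hα
    refine ⟨fun s => Real.exp (s * (Real.cos s) ^ 2), ?_, fun s _ => Real.exp_pos _, ?_⟩
    · exact (Real.continuous_exp.comp (continuous_id.mul (Real.continuous_cos.pow 2))).continuousOn
    · intro t s hs hst
      rw [← Real.exp_add, Real.exp_le_exp]
      have h1 : Real.sin t ^ 2 = 1 - Real.cos t ^ 2 := by
        nlinarith [Real.sin_sq_add_cos_sq t]
      have h2 : Real.sin s ^ 2 = 1 - Real.cos s ^ 2 := by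
        nlinarith [Real.sin_sq_add_cos_sq s]
      have ht : 0 ≤ t := hs.trans hst
      have h3 : 0 ≤ t * Real.cos t ^ 2 := mul_nonneg ht (sq_nonneg _)
      have h4 : (-1 : ℝ) * (t - s) ≤ α * (t - s) := by nlinarith
      simp only [fEx]
      nlinarith
  · intro α hα ⟨M, _, hMpos, hM⟩
    have hc : 0 < -1 - α := by linarith
    obtain ⟨k, hk⟩ := exists_nat_ge ((Real.log (M 0) + 1) / (-1 - α))
    set t : ℝ := Real.pi / 2 + k * Real.pi with ht
    have hπ := Real.pi_pos
    have ht0 : (0 : ℝ) ≤ t := by positivity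
    have hsin : Real.sin t ^ 2 = 1 := by
      rw [ht, Real.sin_add_nat_mul_pi, Real.sin_pi_div_two]
      rw [mul_one, ← pow_mul, mul_comm, pow_mul]
      norm_num
    have hft : fEx t = -t := by rw [fEx, hsin]; ring
    have hf0 : fEx 0 = 0 := by simp [fEx]
    have hle := hM t 0 le_rfl ht0
    rw [hft, hf0, sub_zero, sub_zero] at hle
    have htk : (Real.log (M 0) + 1) / (-1 - α) ≤ t := by
      have : (k : ℝ) ≤ t := by
        rw [ht]
        nlinarith [Real.pi_gt_three]
      linarith [hk.trans this]
    have hlog : Real.log (M 0) + 1 ≤ (-1 - α) * t := by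
      rw [div_le_iff₀ hc] at htk; linarith
    have hM0 : M 0 < Real.exp ((-1 - α) * t) := by
      have := (Real.log_lt_iff_lt_exp (hMpos 0 le_rfl)).mp (by linarith : Real.log (M 0) < (-1 - α) * t)
      exact this
    have : M 0 * Real.exp (α * t) < Real.exp (-t) := by
      calc M 0 * Real.exp (α * t) < Real.exp ((-1 - α) * t) * Real.exp (α * t) := by
            exact mul_lt_mul_of_pos_right hM0 (Real.exp_pos _)
        _ = Real.exp (-t) := by rw [← Real.exp_add]; ring_nf
    linarith
end

section
/- For the evolution family U(t,s) = e^{f(t)−f(s)}·Id with f(t) = −2t + t sin²t, the spaces C_α coincide for all admissible exponents α ≥ −1: for every α ≥ −1 and every u ∈ C_α one has φ_{−1}(t,u) ≤ e^{(α+1)π}‖u‖_α for all t ≥ 0, and hence C_α = C_{−1}. -/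
open MeasureTheory Set

/-- The evolution family U(t,s) = e^{f(t)−f(s)}·Id. -/
noncomputable def Uf (X : Type*) [NormedAddCommGroup X] [NormedSpace ℝ X] :
    ℝ → ℝ → X →L[ℝ] X :=
  fun t s => Real.exp (fEx t - fEx s) • ContinuousLinearMap.id ℝ X


lemma Uf_norm {X : Type*} [NormedAddCommGroup X] [NormedSpace ℝ X] (τ t : ℝ) (v : X) :
    ‖Uf X τ t v‖ = Real.exp (fEx τ - fEx t) * ‖v‖ := by
  simp [Uf, norm_smul, abs_of_pos (Real.exp_pos _)]

lemma key_exp (α t τ : ℝ) (hα : -1 ≤ α) (ht : 0 ≤ t) (hτ : t ≤ τ) :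
    ∃ σ, t ≤ σ ∧
      -(-1 : ℝ) * (τ - t) + (fEx τ - fEx t) ≤
        (α + 1) * Real.pi + (-α * (σ - t) + (fEx σ - fEx t)) := by
  have hπ := Real.pi_pos
  set k : ℤ := ⌈(t - Real.pi / 2) / Real.pi⌉ with hk
  have h1 : (t - Real.pi / 2) / Real.pi ≤ (k : ℝ) := Int.le_ceil _
  have h2 : (k : ℝ) < (t - Real.pi / 2) / Real.pi + 1 := Int.ceil_lt_add_one _
  rw [div_le_iff₀ hπ] at h1
  rw [← sub_lt_iff_lt_add, lt_div_iff₀ hπ] at h2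
  refine ⟨Real.pi / 2 + k * Real.pi, by linarith, ?_⟩
  have hcos : Real.cos (Real.pi / 2 + k * Real.pi) = 0 := by
    rw [Real.cos_add]
    simp [Real.sin_int_mul_pi]
  have hsin : Real.sin (Real.pi / 2 + k * Real.pi) ^ 2 = 1 := by
    have := Real.sin_sq_add_cos_sq (Real.pi / 2 + k * Real.pi)
    rw [hcos] at this; nlinarith
  simp only [fEx, hsin]
  have hpyτ := Real.sin_sq_add_cos_sq τ
  nlinarith [mul_nonneg (le_trans ht hτ) (sq_nonneg (Real.cos τ)),
    mul_nonneg (by linarith : (0:ℝ) ≤ α + 1)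
      (by linarith : (0:ℝ) ≤ Real.pi - (Real.pi / 2 + k * Real.pi - t))]

lemma main_est {X : Type*} [NormedAddCommGroup X] [NormedSpace ℝ X]
    (α t τ : ℝ) (hα : -1 ≤ α) (ht : 0 ≤ t) (hτ : t ≤ τ) (v : X) :
    ∃ σ, t ≤ σ ∧ Real.exp (-(-1 : ℝ) * (τ - t)) * ‖Uf X τ t v‖ ≤
      Real.exp ((α + 1) * Real.pi) *
        (Real.exp (-α * (σ - t)) * ‖Uf X σ t v‖) := by
  obtain ⟨σ, hσ, hkey⟩ := key_exp α t τ hα ht hτ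
  refine ⟨σ, hσ, ?_⟩
  have hE : Real.exp (-(-1 : ℝ) * (τ - t)) * Real.exp (fEx τ - fEx t) ≤
      Real.exp ((α + 1) * Real.pi) *
        (Real.exp (-α * (σ - t)) * Real.exp (fEx σ - fEx t)) := by
    rw [← Real.exp_add, ← Real.exp_add, ← Real.exp_add]
    exact Real.exp_le_exp.mpr (by linarith)
  calc Real.exp (-(-1 : ℝ) * (τ - t)) * ‖Uf X τ t v‖
      = (Real.exp (-(-1 : ℝ) * (τ - t)) * Real.exp (fEx τ - fEx t)) * ‖v‖ := by
        rw [Uf_norm]; ring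
    _ ≤ (Real.exp ((α + 1) * Real.pi) *
          (Real.exp (-α * (σ - t)) * Real.exp (fEx σ - fEx t))) * ‖v‖ :=
        mul_le_mul_of_nonneg_right hE (norm_nonneg _)
    _ = Real.exp ((α + 1) * Real.pi) * (Real.exp (-α * (σ - t)) * ‖Uf X σ t v‖) := by
        rw [Uf_norm]; ring

theorem stmt6 {X : Type*} [NormedAddCommGroup X] [NormedSpace ℝ X] [CompleteSpace X] :
    ∀ α : ℝ, -1 ≤ α →
      (∀ u : ℝ → X, MemC (Uf X) α u → ∀ t, 0 ≤ t →
          phi (Uf X) (-1) t u ≤ Real.exp ((α + 1) * Real.pi) * normC (Uf X) α u) ∧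
      (∀ u : ℝ → X, MemC (Uf X) α u ↔ MemC (Uf X) (-1) u) := by
  intro α hα
  refine ⟨?_, ?_⟩
  · intro u hu t ht
    obtain ⟨-, C, hC⟩ := hu
    haveI : Nonempty (Ici t) := ⟨⟨t, mem_Ici.mpr le_rfl⟩⟩
    have hbddτ : BddAbove (range fun τ : Ici t =>
        Real.exp (-α * ((τ : ℝ) - t)) * ‖Uf X τ t (u t)‖) := by
      refine ⟨C, ?_⟩
      rintro x ⟨τ, rfl⟩
      exact hC t ht τ τ.2
    have hphi_le : ∀ s : Ici (0:ℝ), phi (Uf X) α (s : ℝ) u ≤ C := by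
      intro s
      haveI : Nonempty (Ici (s : ℝ)) := ⟨⟨(s:ℝ), mem_Ici.mpr le_rfl⟩⟩
      exact ciSup_le fun τ => hC s s.2 τ τ.2
    have hnorm_bdd : BddAbove (range fun s : Ici (0:ℝ) => phi (Uf X) α (s : ℝ) u) := by
      refine ⟨C, ?_⟩
      rintro x ⟨s, rfl⟩
      exact hphi_le s
    have hphi_norm : phi (Uf X) α t u ≤ normC (Uf X) α u :=
      le_ciSup hnorm_bdd (⟨t, ht⟩ : Ici (0:ℝ))
    refine ciSup_le fun τ => ?_
    obtain ⟨σ, hσ, hest⟩ := main_est α t (τ : ℝ) hα ht τ.2 (u t)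
    have h2 : Real.exp (-α * (σ - t)) * ‖Uf X σ t (u t)‖ ≤ phi (Uf X) α t u :=
      le_ciSup hbddτ (⟨σ, hσ⟩ : Ici t)
    calc Real.exp (-(-1 : ℝ) * ((τ : ℝ) - t)) * ‖Uf X τ t (u t)‖
        ≤ Real.exp ((α + 1) * Real.pi) *
            (Real.exp (-α * (σ - t)) * ‖Uf X σ t (u t)‖) := hest
      _ ≤ Real.exp ((α + 1) * Real.pi) * phi (Uf X) α t u :=
          mul_le_mul_of_nonneg_left h2 (Real.exp_pos _).le
      _ ≤ Real.exp ((α + 1) * Real.pi) * normC (Uf X) α u :=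
          mul_le_mul_of_nonneg_left hphi_norm (Real.exp_pos _).le
  · intro u
    constructor
    · rintro ⟨hcont, C, hC⟩
      refine ⟨hcont, Real.exp ((α + 1) * Real.pi) * C, ?_⟩
      intro t ht τ hτ
      obtain ⟨σ, hσ, hest⟩ := main_est α t τ hα ht hτ (u t)
      calc Real.exp (-(-1 : ℝ) * (τ - t)) * ‖Uf X τ t (u t)‖
          ≤ Real.exp ((α + 1) * Real.pi) *
              (Real.exp (-α * (σ - t)) * ‖Uf X σ t (u t)‖) := hest
        _ ≤ Real.exp ((α + 1) * Real.pi) * C :=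
            mul_le_mul_of_nonneg_left (hC t ht σ hσ) (Real.exp_pos _).le
    · rintro ⟨hcont, C, hC⟩
      refine ⟨hcont, C, ?_⟩
      intro t ht τ hτ
      have hle : Real.exp (-α * (τ - t)) ≤ Real.exp (-(-1 : ℝ) * (τ - t)) := by
        apply Real.exp_le_exp.mpr
        nlinarith [mul_nonneg (by linarith : (0:ℝ) ≤ 1 + α) (by linarith : (0:ℝ) ≤ τ - t)]
      exact le_trans (mul_le_mul_of_nonneg_right hle (norm_nonneg _)) (hC t ht τ hτ)
end

section
/- Suppose there are constants N, p > 0 such that for all n ∈ ℕ, u ∈ C_α, and t ≥ s ≥ 0: φ_α(t,Φ(s)u)^p (t−s)^n/(n! N^n) ≤ N φ_α(s,u)^p. Then for every δ ∈ (0,1), with Ñ = (N/(1−δ))^{1/p}, one has ‖U(t,s)u(s)‖ ≤ Ñ e^{−δ(t−s)/(pN)} φ_α(s,u) for all u ∈ C_α and t ≥ s ≥ 0. -/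
open MeasureTheory Set

lemma norm_le_phi' {X : Type*} [NormedAddCommGroup X] [NormedSpace ℝ X]
    (U : ℝ → ℝ → X →L[ℝ] X)
    (hId : ∀ t, 0 ≤ t → ∀ x : X, U t t x = x)
    (α : ℝ) (hadm : Admissible U α) (t : ℝ) (ht : 0 ≤ t) (v : ℝ → X) :
    ‖v t‖ ≤ phi U α t v := by
  obtain ⟨M, -, hMpos, hM⟩ := hadm
  have hbdd : BddAbove (Set.range fun τ : Ici t =>
      Real.exp (-α * ((τ : ℝ) - t)) * ‖U τ t (v t)‖) := by
    refine ⟨M t * ‖v t‖, ?_⟩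
    rintro x ⟨⟨τ, hτ⟩, rfl⟩
    have h1 : ‖U τ t (v t)‖ ≤ M t * Real.exp (α * (τ - t)) * ‖v t‖ :=
      le_trans ((U τ t).le_opNorm _)
        (mul_le_mul_of_nonneg_right (hM τ t ht hτ) (norm_nonneg _))
    calc Real.exp (-α * (τ - t)) * ‖U τ t (v t)‖
        ≤ Real.exp (-α * (τ - t)) * (M t * Real.exp (α * (τ - t)) * ‖v t‖) :=
          mul_le_mul_of_nonneg_left h1 (Real.exp_pos _).le
      _ = M t * ‖v t‖ * (Real.exp (-(α * (τ - t))) * Real.exp (α * (τ - t))) := by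
          ring_nf
      _ = M t * ‖v t‖ := by
          rw [← Real.exp_add, neg_add_cancel, Real.exp_zero, mul_one]
  have h := le_ciSup hbdd ⟨t, le_refl t⟩
  simpa [phi, hId t ht, sub_self] using h

theorem stmt15 {X : Type*} [NormedAddCommGroup X] [NormedSpace ℝ X] [CompleteSpace X]
    (U : ℝ → ℝ → X →L[ℝ] X)
    (hId : ∀ t, 0 ≤ t → ∀ x : X, U t t x = x)
    (hComp : ∀ t τ s, 0 ≤ s → s ≤ τ → τ ≤ t → ∀ x : X, U t τ (U τ s x) = U t s x)
    (hCont : ∀ x : X, ContinuousOn (fun p : ℝ × ℝ => U p.1 p.2 x) {p | 0 ≤ p.2 ∧ p.2 ≤ p.1})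
    (α : ℝ) (hadm : Admissible U α)
    (N p : ℝ) (hN : 0 < N) (hp : 0 < p)
    (hIter : ∀ n : ℕ, ∀ u : ℝ → X, MemC U α u → ∀ s t, 0 ≤ s → s ≤ t →
      phi U α t (Phim U s u) ^ p * ((t - s) ^ n / (n.factorial * N ^ n)) ≤
        N * phi U α s u ^ p) :
    ∀ δ : ℝ, δ ∈ Ioo (0:ℝ) 1 → ∀ u : ℝ → X, MemC U α u → ∀ s t, 0 ≤ s → s ≤ t →
      ‖U t s (u s)‖ ≤ (N / (1 - δ)) ^ (1 / p) *
        Real.exp (-δ * (t - s) / (p * N)) * phi U α s u := by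
  intro δ hδ u hu s t hs hst
  obtain ⟨hδ0, hδ1⟩ := hδ
  have ht : 0 ≤ t := hs.trans hst
  have h1δ : (0:ℝ) < 1 - δ := by linarith
  set A := phi U α t (Phim U s u) with hAdef
  set B := phi U α s u with hBdef
  have hBnn : 0 ≤ B := le_trans (norm_nonneg _) (norm_le_phi' U hId α hadm s hs u)
  have hAnn : 0 ≤ A := le_trans (norm_nonneg _) (norm_le_phi' U hId α hadm t ht _)
  have hUA : ‖U t s (u s)‖ ≤ A := by
    have h := norm_le_phi' U hId α hadm t ht (Phim U s u)
    simpa [Phim, hst] using h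
  set x := δ * (t - s) / N with hxdef
  -- termwise inequality
  have hterm : ∀ n : ℕ, A ^ p * (x ^ n / n.factorial) ≤ N * B ^ p * δ ^ n := by
    intro n
    have h := hIter n u hu s t hs hst
    have hδn : (0:ℝ) ≤ δ ^ n := pow_nonneg hδ0.le n
    have heq : A ^ p * (x ^ n / n.factorial) =
        δ ^ n * (A ^ p * ((t - s) ^ n / (n.factorial * N ^ n))) := by
      have hxn : x ^ n = δ ^ n * (t - s) ^ n / N ^ n := by
        rw [hxdef, div_pow, mul_pow]
      have hfac : (n.factorial : ℝ) ≠ 0 := Nat.cast_ne_zero.mpr n.factorial_ne_zero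
      have hNn : N ^ n ≠ 0 := pow_ne_zero n hN.ne'
      rw [hxn]
      field_simp
    rw [heq]
    calc δ ^ n * (A ^ p * ((t - s) ^ n / (n.factorial * N ^ n)))
        ≤ δ ^ n * (N * B ^ p) := mul_le_mul_of_nonneg_left h hδn
      _ = N * B ^ p * δ ^ n := by ring
  have hsum1 : Summable (fun n : ℕ => A ^ p * (x ^ n / n.factorial)) :=
    (Real.summable_pow_div_factorial x).mul_left _
  have hsum2 : Summable (fun n : ℕ => N * B ^ p * δ ^ n) :=
    (summable_geometric_of_lt_one hδ0.le hδ1).mul_left _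
  have htsum : A ^ p * Real.exp x ≤ N * B ^ p * (1 - δ)⁻¹ := by
    have h := Summable.tsum_le_tsum hterm hsum1 hsum2
    rwa [tsum_mul_left, tsum_mul_left, tsum_geometric_of_lt_one hδ0.le hδ1,
      show (∑' n : ℕ, x ^ n / n.factorial) = Real.exp x by
        rw [Real.exp_eq_exp_ℝ, NormedSpace.exp_eq_tsum_div]] at h
  have key : A ^ p ≤ N / (1 - δ) * Real.exp (-x) * B ^ p := by
    have h2 : A ^ p ≤ N * B ^ p * (1 - δ)⁻¹ / Real.exp x :=
      (le_div_iff₀ (Real.exp_pos x)).2 htsum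
    rw [div_eq_mul_inv, ← Real.exp_neg] at h2
    calc A ^ p ≤ N * B ^ p * (1 - δ)⁻¹ * Real.exp (-x) := h2
      _ = N / (1 - δ) * Real.exp (-x) * B ^ p := by rw [div_eq_mul_inv]; ring
  have hpinv : p * (1 / p) = 1 := mul_one_div_cancel hp.ne'
  calc ‖U t s (u s)‖ ≤ A := hUA
    _ = (A ^ p) ^ (1 / p) := by
        rw [← Real.rpow_mul hAnn, hpinv, Real.rpow_one]
    _ ≤ (N / (1 - δ) * Real.exp (-x) * B ^ p) ^ (1 / p) :=
        Real.rpow_le_rpow (Real.rpow_nonneg hAnn p) key (by positivity)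
    _ = (N / (1 - δ)) ^ (1 / p) * Real.exp (-δ * (t - s) / (p * N)) * B := by
        have hxp : -x * (1 / p) = -δ * (t - s) / (p * N) := by
          rw [hxdef]; ring
        rw [Real.mul_rpow (by positivity) (Real.rpow_nonneg hBnn p),
          Real.mul_rpow (by positivity) (Real.exp_pos _).le,
          ← Real.rpow_mul hBnn, hpinv, Real.rpow_one,
          ← Real.exp_mul, hxp]
end

section
/- If U is α-nonuniform exponentially stable (α < 0 admissible) and p > 0, then the Lyapunov-type function W(t,u) := ∫_t^∞ φ_α(ξ, Φ(t)u)^p dξ satisfies: (i) W(t₀,u) ≤ K φ_α(t₀,u)^p for some K > 0; and (ii) W(t,u) + ∫_{t₀}^{t} φ_α(ξ,u)^p dξ = W(t₀,u) for all t ≥ t₀ ≥ 0 and u ∈ Φ(t₀)C_α. -/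
open MeasureTheory Set

/-- Auxiliary: F(ξ) = sup_{τ ≥ max ξ t₀} e^{-ατ} ‖U(τ,t₀)x‖. -/
noncomputable def Fsup {X : Type*} [NormedAddCommGroup X] [NormedSpace ℝ X]
    (U : ℝ → ℝ → X →L[ℝ] X) (α t₀ : ℝ) (x : X) (ξ : ℝ) : ℝ :=
  ⨆ τ : Ici (max ξ t₀), Real.exp (-α * (τ : ℝ)) * ‖U τ t₀ x‖

section Aux

variable {X : Type*} [NormedAddCommGroup X] [NormedSpace ℝ X]
variable {U : ℝ → ℝ → X →L[ℝ] X} {α : ℝ} {M : ℝ → ℝ}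

lemma term_bound (hBound : ∀ t s, 0 ≤ s → s ≤ t → ‖U t s‖ ≤ M s * Real.exp (α * (t - s)))
    {t₀ : ℝ} (ht₀ : 0 ≤ t₀) (x : X) {τ : ℝ} (hτ : t₀ ≤ τ) :
    Real.exp (-α * τ) * ‖U τ t₀ x‖ ≤ M t₀ * Real.exp (-α * t₀) * ‖x‖ := by
  have h1 : ‖U τ t₀ x‖ ≤ M t₀ * Real.exp (α * (τ - t₀)) * ‖x‖ :=
    le_trans ((U τ t₀).le_opNorm x)
      (mul_le_mul_of_nonneg_right (hBound τ t₀ ht₀ hτ) (norm_nonneg x))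
  calc Real.exp (-α * τ) * ‖U τ t₀ x‖
      ≤ Real.exp (-α * τ) * (M t₀ * Real.exp (α * (τ - t₀)) * ‖x‖) :=
        mul_le_mul_of_nonneg_left h1 (Real.exp_pos _).le
    _ = (Real.exp (-α * τ) * Real.exp (α * (τ - t₀))) * (M t₀ * ‖x‖) := by ring
    _ = M t₀ * Real.exp (-α * t₀) * ‖x‖ := by
        rw [← Real.exp_add]; ring_nf

lemma Fsup_bddAbove (hBound : ∀ t s, 0 ≤ s → s ≤ t → ‖U t s‖ ≤ M s * Real.exp (α * (t - s)))
    {t₀ : ℝ} (ht₀ : 0 ≤ t₀) (x : X) (ξ : ℝ) :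
    BddAbove (range fun τ : Ici (max ξ t₀) => Real.exp (-α * (τ : ℝ)) * ‖U τ t₀ x‖) := by
  refine ⟨M t₀ * Real.exp (-α * t₀) * ‖x‖, ?_⟩
  rintro b ⟨τ, rfl⟩
  exact term_bound hBound ht₀ x (le_trans (le_max_right _ _) τ.2)

lemma Fsup_nonneg (t₀ : ℝ) (x : X) (ξ : ℝ) : 0 ≤ Fsup U α t₀ x ξ :=
  Real.iSup_nonneg fun _ => mul_nonneg (Real.exp_pos _).le (norm_nonneg _)

lemma Fsup_le (hBound : ∀ t s, 0 ≤ s → s ≤ t → ‖U t s‖ ≤ M s * Real.exp (α * (t - s)))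
    {t₀ : ℝ} (ht₀ : 0 ≤ t₀) (x : X) (ξ : ℝ) :
    Fsup U α t₀ x ξ ≤ M t₀ * Real.exp (-α * t₀) * ‖x‖ := by
  haveI : Nonempty (Ici (max ξ t₀)) := ⟨⟨max ξ t₀, self_mem_Ici⟩⟩
  exact ciSup_le fun τ => term_bound hBound ht₀ x (le_trans (le_max_right _ _) τ.2)

lemma Fsup_antitone (hBound : ∀ t s, 0 ≤ s → s ≤ t → ‖U t s‖ ≤ M s * Real.exp (α * (t - s)))
    {t₀ : ℝ} (ht₀ : 0 ≤ t₀) (x : X) : Antitone (Fsup U α t₀ x) := by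
  intro ξ₁ ξ₂ h
  haveI : Nonempty (Ici (max ξ₂ t₀)) := ⟨⟨max ξ₂ t₀, self_mem_Ici⟩⟩
  refine ciSup_le fun τ => ?_
  exact le_ciSup_of_le (Fsup_bddAbove hBound ht₀ x ξ₁)
    ⟨(τ : ℝ), le_trans (max_le_max h le_rfl) τ.2⟩ le_rfl

lemma phi_eq (hComp : ∀ t τ s, 0 ≤ s → s ≤ τ → τ ≤ t → ∀ x : X, U t τ (U τ s x) = U t s x)
    {t₀ ξ : ℝ} (ht₀ : 0 ≤ t₀) (hξ : t₀ ≤ ξ) (x : X) {w : ℝ → X} (hw : w ξ = U ξ t₀ x) :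
    phi U α ξ w = Real.exp (α * ξ) * Fsup U α t₀ x ξ := by
  have hmax : max ξ t₀ = ξ := max_eq_left hξ
  rw [phi, Fsup, hmax, Real.mul_iSup_of_nonneg (Real.exp_pos _).le]
  refine iSup_congr fun τ => ?_
  have he : Real.exp (-α * ((τ : ℝ) - ξ)) = Real.exp (α * ξ) * Real.exp (-α * (τ : ℝ)) := by
    rw [← Real.exp_add]; congr 1; ring
  rw [hw, hComp (τ : ℝ) ξ t₀ ht₀ hξ τ.2 x, he, mul_assoc]

lemma exp_integrableOn {c : ℝ} (hc : c < 0) (a : ℝ) :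
    IntegrableOn (fun x : ℝ => Real.exp (c * (x - a))) (Ioi a) := by
  have h := (exp_neg_integrableOn_Ioi a (neg_pos.2 hc)).const_mul (Real.exp (-(c * a)))
  have heq : (fun x : ℝ => Real.exp (-(c * a)) * Real.exp (- -c * x))
      = fun x : ℝ => Real.exp (c * (x - a)) := by
    funext x; rw [← Real.exp_add]; congr 1; ring
  exact heq ▸ h

lemma exp_integral {c : ℝ} (hc : c < 0) (a : ℝ) :
    ∫ x in Ioi a, Real.exp (c * (x - a)) = -c⁻¹ := by
  have hder : ∀ x ∈ Ici a, HasDerivAt (fun y : ℝ => c⁻¹ * Real.exp (c * (y - a)))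
      (Real.exp (c * (x - a))) x := by
    intro x _
    have h1 : HasDerivAt (fun y : ℝ => c * (y - a)) c x := by
      simpa using ((hasDerivAt_id x).sub_const a).const_mul c
    have h2 := (h1.exp).const_mul c⁻¹
    refine h2.congr_deriv ?_
    rw [mul_comm c⁻¹, mul_assoc, mul_inv_cancel₀ hc.ne, mul_one]
  have htend : Filter.Tendsto (fun y : ℝ => c⁻¹ * Real.exp (c * (y - a)))
      Filter.atTop (nhds 0) := by
    have h3 : Filter.Tendsto (fun y : ℝ => c * (y - a)) Filter.atTop Filter.atBot := by
      apply Filter.Tendsto.const_mul_atTop_of_neg hc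
      exact Filter.tendsto_atTop_add_const_right _ _ Filter.tendsto_id
    simpa using (Real.tendsto_exp_atBot.comp h3).const_mul c⁻¹
  have h := integral_Ioi_of_hasDerivAt_of_tendsto' hder (exp_integrableOn hc a) htend
  rw [h]; simp

end Aux

theorem stmt17 {X : Type*} [NormedAddCommGroup X] [NormedSpace ℝ X] [CompleteSpace X]
    (U : ℝ → ℝ → X →L[ℝ] X)
    (hId : ∀ t, 0 ≤ t → ∀ x : X, U t t x = x)
    (hComp : ∀ t τ s, 0 ≤ s → s ≤ τ → τ ≤ t → ∀ x : X, U t τ (U τ s x) = U t s x)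
    (hCont : ∀ x : X, ContinuousOn (fun p : ℝ × ℝ => U p.1 p.2 x) {p | 0 ≤ p.2 ∧ p.2 ≤ p.1})
    (α : ℝ) (hneg : α < 0)
    (M : ℝ → ℝ) (hM : ContinuousOn M (Ici 0)) (hMpos : ∀ s, 0 ≤ s → 0 < M s)
    (hBound : ∀ t s, 0 ≤ s → s ≤ t → ‖U t s‖ ≤ M s * Real.exp (α * (t - s)))
    (p : ℝ) (hp : 0 < p) :
    -- W(t,u) := ∫_t^∞ φ_α(ξ, Φ(t)u)^p dξ
    (∃ K : ℝ, 0 < K ∧ ∀ t₀, 0 ≤ t₀ → ∀ u : ℝ → X,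
        (∃ v : ℝ → X, MemC U α v ∧ u = Phim U t₀ v) →
        (∫ ξ in Ioi t₀, phi U α ξ (Phim U t₀ u) ^ p) ≤ K * phi U α t₀ u ^ p) ∧
    (∀ t₀ t, 0 ≤ t₀ → t₀ ≤ t → ∀ u : ℝ → X,
        (∃ v : ℝ → X, MemC U α v ∧ u = Phim U t₀ v) →
        (∫ ξ in Ioi t, phi U α ξ (Phim U t u) ^ p) +
            (∫ ξ in t₀..t, phi U α ξ u ^ p) =
          ∫ ξ in Ioi t₀, phi U α ξ (Phim U t₀ u) ^ p) := by
  have hαp : α * p < 0 := mul_neg_of_neg_of_pos hneg hp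
  -- basic facts about g(ξ) = (e^{αξ} F(ξ))^p
  have hgmeas : ∀ (t₀ : ℝ), 0 ≤ t₀ → ∀ x : X,
      Measurable (fun ξ => (Real.exp (α * ξ) * Fsup U α t₀ x ξ) ^ p) := by
    intro t₀ ht₀ x
    exact (Real.continuous_rpow_const hp.le).measurable.comp
      ((Real.measurable_exp.comp (measurable_id.const_mul α)).mul
        (Fsup_antitone hBound ht₀ x).measurable)
  have hgint : ∀ (t₀ : ℝ), 0 ≤ t₀ → ∀ x : X,
      IntegrableOn (fun ξ => (Real.exp (α * ξ) * Fsup U α t₀ x ξ) ^ p) (Ioi t₀) := by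
    intro t₀ ht₀ x
    set D : ℝ := M t₀ * Real.exp (-α * t₀) * ‖x‖ with hDdef
    have hD : 0 ≤ D :=
      mul_nonneg (mul_nonneg (hMpos t₀ ht₀).le (Real.exp_pos _).le) (norm_nonneg _)
    have hbd : IntegrableOn
        (fun ξ => (D * Real.exp (α * t₀)) ^ p * Real.exp ((α * p) * (ξ - t₀))) (Ioi t₀) :=
      (exp_integrableOn hαp t₀).const_mul _
    refine hbd.mono' ((hgmeas t₀ ht₀ x).aestronglyMeasurable) (Filter.Eventually.of_forall ?_)
    intro ξ
    have h0 : 0 ≤ Real.exp (α * ξ) * Fsup U α t₀ x ξ :=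
      mul_nonneg (Real.exp_pos _).le (Fsup_nonneg t₀ x ξ)
    rw [Real.norm_of_nonneg (Real.rpow_nonneg h0 p)]
    calc (Real.exp (α * ξ) * Fsup U α t₀ x ξ) ^ p
        ≤ (Real.exp (α * ξ) * D) ^ p :=
          Real.rpow_le_rpow h0
            (mul_le_mul_of_nonneg_left (Fsup_le hBound ht₀ x ξ) (Real.exp_pos _).le) hp.le
      _ = (D * Real.exp (α * t₀)) ^ p * Real.exp ((α * p) * (ξ - t₀)) := by
          rw [Real.mul_rpow (Real.exp_pos _).le hD, Real.mul_rpow hD (Real.exp_pos _).le,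
            ← Real.exp_mul, ← Real.exp_mul]
          have he : α * ξ * p = α * t₀ * p + α * p * (ξ - t₀) := by ring
          rw [mul_comm, mul_assoc (D ^ p), ← Real.exp_add, he]
  -- congruence: the three integrands agree with g
  have hgcong : ∀ (t₀ t : ℝ), 0 ≤ t₀ → t₀ ≤ t → ∀ u : ℝ → X,
      (∀ ξ, t₀ ≤ ξ → u ξ = U ξ t₀ (u t₀)) →
      ∀ ξ ∈ Ioi t, phi U α ξ (Phim U t u) ^ p
        = (Real.exp (α * ξ) * Fsup U α t₀ (u t₀) ξ) ^ p := by
    intro t₀ t ht₀ htt u hux ξ hξ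
    have hξ' : t < ξ := hξ
    have hw : Phim U t u ξ = U ξ t₀ (u t₀) := by
      rw [Phim]
      simp only [if_pos hξ'.le]
      rw [hux t htt, hComp ξ t t₀ ht₀ htt hξ'.le]
    rw [phi_eq hComp ht₀ (htt.trans hξ'.le) (u t₀) hw]
  have hux : ∀ (t₀ : ℝ), 0 ≤ t₀ → ∀ u : ℝ → X,
      (∃ v : ℝ → X, MemC U α v ∧ u = Phim U t₀ v) →
      ∀ ξ, t₀ ≤ ξ → u ξ = U ξ t₀ (u t₀) := by
    rintro t₀ ht₀ u ⟨v, -, rfl⟩ ξ hξ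
    simp only [Phim, if_pos hξ, if_pos (le_refl t₀)]
    rw [hId t₀ ht₀ (v t₀)]
  constructor
  · refine ⟨-(α * p)⁻¹, neg_pos.2 (inv_lt_zero.2 hαp), ?_⟩
    intro t₀ ht₀ u hu
    have huξ := hux t₀ ht₀ u hu
    set φ := phi U α t₀ u with hφdef
    have hφ : φ = Real.exp (α * t₀) * Fsup U α t₀ (u t₀) t₀ :=
      phi_eq hComp ht₀ le_rfl (u t₀) ((hId t₀ ht₀ (u t₀)).symm)
    have hcong : ∀ ξ ∈ Ioi t₀, phi U α ξ (Phim U t₀ u) ^ p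
        = (Real.exp (α * ξ) * Fsup U α t₀ (u t₀) ξ) ^ p :=
      hgcong t₀ t₀ ht₀ le_rfl u huξ
    rw [setIntegral_congr_fun measurableSet_Ioi fun ξ hξ => hcong ξ hξ]
    have hmono : ∀ ξ ∈ Ioi t₀, (Real.exp (α * ξ) * Fsup U α t₀ (u t₀) ξ) ^ p
        ≤ φ ^ p * Real.exp ((α * p) * (ξ - t₀)) := by
      intro ξ hξ
      have hξ' : t₀ ≤ ξ := le_of_lt hξ
      have h0 : 0 ≤ Real.exp (α * ξ) * Fsup U α t₀ (u t₀) ξ :=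
        mul_nonneg (Real.exp_pos _).le (Fsup_nonneg _ _ _)
      calc (Real.exp (α * ξ) * Fsup U α t₀ (u t₀) ξ) ^ p
          ≤ (Real.exp (α * ξ) * Fsup U α t₀ (u t₀) t₀) ^ p :=
            Real.rpow_le_rpow h0 (mul_le_mul_of_nonneg_left
              (Fsup_antitone hBound ht₀ (u t₀) hξ') (Real.exp_pos _).le) hp.le
        _ = φ ^ p * Real.exp ((α * p) * (ξ - t₀)) := by
            rw [hφ, Real.mul_rpow (Real.exp_pos _).le (Fsup_nonneg _ _ _),
              Real.mul_rpow (Real.exp_pos _).le (Fsup_nonneg _ _ _),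
              ← Real.exp_mul, ← Real.exp_mul]
            have he : α * ξ * p = α * t₀ * p + α * p * (ξ - t₀) := by ring
            rw [he, Real.exp_add]
            ring
    have hbint : IntegrableOn (fun ξ => φ ^ p * Real.exp ((α * p) * (ξ - t₀))) (Ioi t₀) :=
      (exp_integrableOn hαp t₀).const_mul _
    have hle := setIntegral_mono_on (hgint t₀ ht₀ (u t₀)) hbint measurableSet_Ioi hmono
    refine le_trans hle ?_
    rw [MeasureTheory.integral_const_mul, exp_integral hαp t₀]
    exact le_of_eq (mul_comm _ _)
  · intro t₀ t ht₀ htt u hu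
    have huξ := hux t₀ ht₀ u hu
    have h1 : ∫ ξ in Ioi t, phi U α ξ (Phim U t u) ^ p
        = ∫ ξ in Ioi t, (Real.exp (α * ξ) * Fsup U α t₀ (u t₀) ξ) ^ p :=
      setIntegral_congr_fun measurableSet_Ioi fun ξ hξ => hgcong t₀ t ht₀ htt u huξ ξ hξ
    have h2 : ∫ ξ in t₀..t, phi U α ξ u ^ p
        = ∫ ξ in Ioc t₀ t, (Real.exp (α * ξ) * Fsup U α t₀ (u t₀) ξ) ^ p := by
      rw [intervalIntegral.integral_of_le htt]
      refine setIntegral_congr_fun measurableSet_Ioc fun ξ hξ => ?_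
      rw [phi_eq hComp ht₀ hξ.1.le (u t₀) (huξ ξ hξ.1.le)]
    have h3 : ∫ ξ in Ioi t₀, phi U α ξ (Phim U t₀ u) ^ p
        = ∫ ξ in Ioi t₀, (Real.exp (α * ξ) * Fsup U α t₀ (u t₀) ξ) ^ p :=
      setIntegral_congr_fun measurableSet_Ioi fun ξ hξ => hgcong t₀ t₀ ht₀ le_rfl u huξ ξ hξ
    rw [h1, h2, h3]
    have hsplit : ∫ ξ in Ioi t₀, (Real.exp (α * ξ) * Fsup U α t₀ (u t₀) ξ) ^ p
        = (∫ ξ in Ioc t₀ t, (Real.exp (α * ξ) * Fsup U α t₀ (u t₀) ξ) ^ p)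
          + ∫ ξ in Ioi t, (Real.exp (α * ξ) * Fsup U α t₀ (u t₀) ξ) ^ p := by
      rw [← Ioc_union_Ioi_eq_Ioi htt]
      exact setIntegral_union Ioc_disjoint_Ioi_same measurableSet_Ioi
        ((hgint t₀ ht₀ (u t₀)).mono_set Ioc_subset_Ioi_self)
        ((hgint t₀ ht₀ (u t₀)).mono_set (Ioi_subset_Ioi htt))
    rw [hsplit, add_comm]
end
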